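/- Let (X,⊥) be a point-closed Sasaki space. Then C(X,⊥) is an atomistic lattice with the covering property. -/
import Mathlib


/-- The set of elements orthogonal to every element of `A`. -/
def perpSet {X : Type*} (perp : X → X → Prop) (A : Set X) : Set X :=
  {x | ∀ a ∈ A, perp x a}

/-- A subset is orthoclosed if it equals its double orthocomplement. -/
def Orthoclosed {X : Type*} (perp : X → X → Prop) (A : Set X) : Prop :=
  perpSet perp (perpSet perp A) = A

/-- `φ` (restricted to `∁(A^⊥)`) is a Sasaki map to the orthoclosed set `A`. -/
def IsSasakiMap {X : Type*} (perp : X → X → Prop) (A : Set X) (φ : X → X) : Prop :=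
  (∀ e ∈ (perpSet perp A)ᶜ, φ e ∈ A) ∧
  (∀ e ∈ A, φ e = e) ∧
  (∀ e ∈ (perpSet perp A)ᶜ, ∀ f ∈ (perpSet perp A)ᶜ, (perp (φ e) f ↔ perp e (φ f)))

/-- A Sasaki space: every orthoclosed subset admits a Sasaki map. -/
def IsSasakiSpace {X : Type*} (perp : X → X → Prop) : Prop :=
  ∀ A : Set X, Orthoclosed perp A → ∃ φ : X → X, IsSasakiMap perp A φ

/-- An atom of the lattice of orthoclosed subsets: a minimal nonempty
orthoclosed set. -/
def IsAtomOC {X : Type*} (perp : X → X → Prop) (A : Set X) : Prop :=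
  Orthoclosed perp A ∧ A ≠ ∅ ∧
    ∀ B : Set X, Orthoclosed perp B → B ⊆ A → B = ∅ ∨ B = A

section Helpers

variable {X : Type*} {perp : X → X → Prop}

lemma perpSet_anti (perp : X → X → Prop) {S T : Set X} (h : S ⊆ T) :
    perpSet perp T ⊆ perpSet perp S := fun x hx a ha => hx a (h ha)

lemma subset_perpSet_perpSet (hsymm : ∀ x y, perp x y → perp y x) (S : Set X) :
    S ⊆ perpSet perp (perpSet perp S) := fun s hs z hz => hsymm _ _ (hz s hs)

lemma perpSet_triple (hsymm : ∀ x y, perp x y → perp y x) (S : Set X) :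
    perpSet perp (perpSet perp (perpSet perp S)) = perpSet perp S :=
  Set.Subset.antisymm (perpSet_anti perp (subset_perpSet_perpSet hsymm S))
    (subset_perpSet_perpSet hsymm _)

lemma singleton_isAtomOC (hpoint : ∀ x : X, Orthoclosed perp {x}) (x : X) :
    IsAtomOC perp {x} :=
  ⟨hpoint x, Set.singleton_ne_empty x,
    fun B _ hB => Set.subset_singleton_iff_eq.mp hB⟩

end Helpers

/-- for a point-closed Sasaki space, `C(X,⊥)` is atomistic (the
atoms are exactly the singletons and every orthoclosed set is the join of the
atoms it contains) and has the covering property. -/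
theorem pointClosed_sasaki_is_AC {X : Type*} (perp : X → X → Prop)
    (hsymm : ∀ x y, perp x y → perp y x) (hirrefl : ∀ x, ¬ perp x x)
    (hpoint : ∀ x : X, Orthoclosed perp {x})
    (hSasaki : IsSasakiSpace perp) :
    (∀ A : Set X, Orthoclosed perp A → (IsAtomOC perp A ↔ ∃ x : X, A = {x})) ∧
    (∀ A : Set X, Orthoclosed perp A →
      A = perpSet perp (perpSet perp (⋃₀ {B | IsAtomOC perp B ∧ B ⊆ A}))) ∧
    (∀ A : Set X, Orthoclosed perp A → ∀ x ∉ A,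
      A ⊂ perpSet perp (perpSet perp (A ∪ {x})) ∧
      ∀ B : Set X, Orthoclosed perp B → A ⊂ B →
        B ⊆ perpSet perp (perpSet perp (A ∪ {x})) →
        B = perpSet perp (perpSet perp (A ∪ {x}))) := by
  refine ⟨?_, ?_, ?_⟩
  · -- Part 1: atoms are exactly the singletons
    intro A hA
    constructor
    · rintro ⟨hAc, hne, hmin⟩
      obtain ⟨x, hx⟩ := Set.nonempty_iff_ne_empty.mpr hne
      rcases hmin {x} (hpoint x) (Set.singleton_subset_iff.mpr hx) with h | h
      · exact absurd h (Set.singleton_ne_empty x)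
      · exact ⟨x, h.symm⟩
    · rintro ⟨x, rfl⟩
      exact singleton_isAtomOC hpoint x
  · -- Part 2: atomistic
    intro A hA
    have hunion : ⋃₀ {B | IsAtomOC perp B ∧ B ⊆ A} = A := by
      apply Set.Subset.antisymm
      · rintro y ⟨B, ⟨_, hBA⟩, hyB⟩
        exact hBA hyB
      · intro y hy
        exact ⟨{y}, ⟨singleton_isAtomOC hpoint y, Set.singleton_subset_iff.mpr hy⟩, rfl⟩
    rw [hunion, hA]
  · -- Part 3: covering property
    intro A hA x hxA
    obtain ⟨φ, hmap, hfix, hadj⟩ := hSasaki (perpSet perp A) (perpSet_triple hsymm A)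
    rw [hA] at hmap hadj
    -- Elements of A^⊥ are not in A
    have hAdisj : ∀ w ∈ perpSet perp A, w ∉ A := fun w hw hwA => hirrefl w (hw w hwA)
    -- Key transfer lemma: for e ∉ A and w ∈ A^⊥, φ e ⊥ w ↔ e ⊥ w
    have L1 : ∀ e, e ∉ A → ∀ w ∈ perpSet perp A, (perp (φ e) w ↔ perp e w) := by
      intro e he w hw
      have := hadj e he w (hAdisj w hw)
      rwa [hfix w hw] at this
    set p := φ x with hp_def
    have hp : p ∈ perpSet perp A := hmap x hxA
    set Cperp := perpSet perp (A ∪ {x}) with hCperp_def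
    set C := perpSet perp Cperp with hC_def
    have hCperp_char : ∀ w, w ∈ Cperp ↔ (w ∈ perpSet perp A ∧ perp w x) := by
      intro w
      constructor
      · intro h
        exact ⟨fun a ha => h a (Or.inl ha), h x (Or.inr rfl)⟩
      · rintro ⟨h1, h2⟩ a (ha | rfl)
        · exact h1 a ha
        · exact h2
    have hCperp_p : ∀ w, w ∈ Cperp ↔ (w ∈ perpSet perp A ∧ perp w p) := by
      intro w
      rw [hCperp_char w]
      constructor
      · rintro ⟨h1, h2⟩
        exact ⟨h1, hsymm _ _ ((L1 x hxA w h1).mpr (hsymm _ _ h2))⟩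
      · rintro ⟨h1, h2⟩
        exact ⟨h1, hsymm _ _ ((L1 x hxA w h1).mp (hsymm _ _ h2))⟩
    -- Any element of A^⊥ ∩ C is perp to everything perp to p
    have key : ∀ d, d ∈ perpSet perp A → d ∈ C → ∀ u, perp u p → perp u d := by
      intro d hdA hdC u hup
      by_cases hu : u ∈ A
      · exact hsymm _ _ (hdA u hu)
      · have hφu : φ u ∈ perpSet perp A := hmap u hu
        have h1 : perp (φ u) p := (L1 u hu p hp).mpr hup
        have hφuC : φ u ∈ Cperp := (hCperp_p (φ u)).mpr ⟨hφu, h1⟩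
        have h2 : perp d (φ u) := hdC (φ u) hφuC
        exact (L1 u hu d hdA).mp (hsymm _ _ h2)
    -- Hence A^⊥ ∩ C = {p}, by point-closedness
    have hD_single : ∀ d, d ∈ perpSet perp A → d ∈ C → d = p := by
      intro d hdA hdC
      have hmem : d ∈ perpSet perp (perpSet perp {p}) := by
        intro u hu
        exact hsymm _ _ (key d hdA hdC u (hu p rfl))
      rw [hpoint p] at hmem
      exact hmem
    have hxC : x ∈ C := fun w hw => hsymm _ _ (hw x (Or.inr rfl))
    have hAsubC : A ⊆ C := fun a ha w hw => hsymm _ _ (hw a (Or.inl ha))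
    refine ⟨⟨hAsubC, fun hsub => hxA (hsub hxC)⟩, ?_⟩
    intro B hB hAB hBC
    obtain ⟨b, hbB, hbA⟩ := Set.exists_of_ssubset hAB
    have hbC : b ∈ C := hBC hbB
    have hφbC : φ b ∈ C := by
      intro w hw
      exact (L1 b hbA w ((hCperp_char w).mp hw).1).mpr (hbC w hw)
    have hφb : φ b = p := hD_single (φ b) (hmap b hbA) hφbC
    have hBperp : perpSet perp B ⊆ Cperp := by
      intro z hz
      have hzA : z ∈ perpSet perp A := fun a ha => hz a (hAB.1 ha)
      have hzb : perp z b := hz b hbB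
      have hzp : perp z p := by
        rw [← hφb]
        exact hsymm _ _ ((L1 b hbA z hzA).mpr (hsymm _ _ hzb))
      exact (hCperp_p z).mpr ⟨hzA, hzp⟩
    have hCB : C ⊆ B := by
      rw [← hB]
      exact perpSet_anti perp hBperp
    exact Set.Subset.antisymm hBC hCB
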